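/- Let 0 < ε ≤ 1 and let Ext: {0,1}^{n_1}×{0,1}^{n_2} → {0,1}^m be a (k_1,k_2,ε) two-source extractor. Then Ext is a (k_1+log₂(1/ε), k_2+log₂(1/ε), 3ε) classical-proof two-source extractor in the Markov model; that is, for every joint distribution of (X_1,X_2,Z) with Z a finite random variable, X_i taking values in {0,1}^{n_i}, such that X_1 and X_2 are conditionally independent given Z, H_min(X_1|Z) ≥ k_1 + log₂(1/ε) and H_min(X_2|Z) ≥ k_2 + log₂(1/ε), one has (1/2)∑_{y∈{0,1}^m, z} |Pr[Ext(X_1,X_2)=y, Z=z] − 2^{−m}·Pr[Z=z]| ≤ 3ε. -/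

import Mathlib

open Kronecker Matrix
open scoped ComplexOrder

private lemma rpow_neg_add_logb (k ε : ℝ) (hε : 0 < ε) :
    (2:ℝ) ^ (-(k + Real.logb 2 (1/ε))) = ε * (2:ℝ) ^ (-k) := by
  rw [neg_add, Real.rpow_add (by norm_num : (0:ℝ) < 2), one_div, Real.logb_inv, neg_neg,
    Real.rpow_logb (by norm_num) (by norm_num) hε, mul_comm]

private lemma rpow_mul_rpow_neg (k : ℝ) : (2:ℝ) ^ k * (2:ℝ) ^ (-k) = 1 := by
  rw [← Real.rpow_add (by norm_num : (0:ℝ) < 2)]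
  simp

theorem two_source_extractor_classical_markov
    (n1 n2 m : ℕ) (Ext : (Fin n1 → Bool) → (Fin n2 → Bool) → Fin m → Bool)
    (k1 k2 ε : ℝ) (hε0 : 0 < ε) (hε1 : ε ≤ 1)
    -- `Ext` is a `(k₁,k₂,ε)` two-source extractor:
    (hExt : ∀ (p1 : (Fin n1 → Bool) → ℝ) (p2 : (Fin n2 → Bool) → ℝ),
      (∀ x1, 0 ≤ p1 x1) → (∀ x2, 0 ≤ p2 x2) →
      (∑ x1, p1 x1) = 1 → (∑ x2, p2 x2) = 1 →
      Finset.univ.sup' Finset.univ_nonempty p1 ≤ (2:ℝ) ^ (-k1) →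
      Finset.univ.sup' Finset.univ_nonempty p2 ≤ (2:ℝ) ^ (-k2) →
      (1/2) * ∑ y : Fin m → Bool,
        |(∑ x ∈ Finset.univ.filter
            (fun x : (Fin n1 → Bool) × (Fin n2 → Bool) => Ext x.1 x.2 = y),
            p1 x.1 * p2 x.2) - ((2:ℝ)^m)⁻¹| ≤ ε) :
    -- then it is a classical-proof two-source extractor in the Markov model:
    ∀ (Z : Type) [Fintype Z],
    ∀ q : (Fin n1 → Bool) → (Fin n2 → Bool) → Z → ℝ,
      (∀ x1 x2 z, 0 ≤ q x1 x2 z) →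
      (∑ x1, ∑ x2, ∑ z, q x1 x2 z) = 1 →
      -- `X₁` and `X₂` are conditionally independent given `Z`
      (∀ x1 x2 z, q x1 x2 z * (∑ x1', ∑ x2', q x1' x2' z)
        = (∑ x2', q x1 x2' z) * (∑ x1', q x1' x2 z)) →
      -- `H_min(X_i | Z) ≥ k_i + log₂(1/ε)`
      (∑ z, Finset.univ.sup' Finset.univ_nonempty (fun x1 => ∑ x2, q x1 x2 z)
        ≤ (2:ℝ) ^ (-(k1 + Real.logb 2 (1/ε)))) →
      (∑ z, Finset.univ.sup' Finset.univ_nonempty (fun x2 => ∑ x1, q x1 x2 z)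
        ≤ (2:ℝ) ^ (-(k2 + Real.logb 2 (1/ε)))) →
      (1/2) * ∑ y : Fin m → Bool, ∑ z,
        |(∑ x ∈ Finset.univ.filter
            (fun x : (Fin n1 → Bool) × (Fin n2 → Bool) => Ext x.1 x.2 = y),
            q x.1 x.2 z)
          - ((2:ℝ)^m)⁻¹ * ∑ x1, ∑ x2, q x1 x2 z|
        ≤ 3 * ε := by
  intro Z _ q hq hsum hMarkov hH1 hH2
  classical
  -- notation
  set P : Z → ℝ := fun z => ∑ x1, ∑ x2, q x1 x2 z with hPdef
  set M1 : Z → ℝ := fun z =>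
    Finset.univ.sup' Finset.univ_nonempty (fun x1 => ∑ x2, q x1 x2 z) with hM1def
  set M2 : Z → ℝ := fun z =>
    Finset.univ.sup' Finset.univ_nonempty (fun x2 => ∑ x1, q x1 x2 z) with hM2def
  have hP0 : ∀ z, 0 ≤ P z := fun z =>
    Finset.sum_nonneg fun _ _ => Finset.sum_nonneg fun _ _ => hq _ _ _
  have hPsum : ∑ z, P z = 1 := by
    rw [← hsum]
    simp_rw [hPdef]
    rw [Finset.sum_comm]
    exact Finset.sum_congr rfl fun x1 _ => Finset.sum_comm
  have hM10 : ∀ z, 0 ≤ M1 z := by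
    intro z
    refine le_trans ?_ (Finset.le_sup' _ (Finset.mem_univ (default : Fin n1 → Bool)))
    exact Finset.sum_nonneg fun _ _ => hq _ _ _
  have hM20 : ∀ z, 0 ≤ M2 z := by
    intro z
    refine le_trans ?_ (Finset.le_sup' _ (Finset.mem_univ (default : Fin n2 → Bool)))
    exact Finset.sum_nonneg fun _ _ => hq _ _ _
  -- inner quantity
  set T : Z → ℝ := fun z => ∑ y : Fin m → Bool,
    |(∑ x ∈ Finset.univ.filter
        (fun x : (Fin n1 → Bool) × (Fin n2 → Bool) => Ext x.1 x.2 = y),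
        q x.1 x.2 z) - ((2:ℝ)^m)⁻¹ * P z| with hTdef
  have hfib : ∀ z, (∑ y : Fin m → Bool, ∑ x ∈ Finset.univ.filter
      (fun x : (Fin n1 → Bool) × (Fin n2 → Bool) => Ext x.1 x.2 = y),
      q x.1 x.2 z) = P z := by
    intro z
    calc (∑ y : Fin m → Bool, ∑ x ∈ Finset.univ.filter
          (fun x : (Fin n1 → Bool) × (Fin n2 → Bool) => Ext x.1 x.2 = y),
          q x.1 x.2 z)
        = ∑ x : (Fin n1 → Bool) × (Fin n2 → Bool), q x.1 x.2 z :=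
          Finset.sum_fiberwise _ _ _
      _ = P z := Fintype.sum_prod_type _
  have hcardY : (Finset.univ : Finset (Fin m → Bool)).card = 2 ^ m := by
    simp [Finset.card_univ]
  -- bad bound : T z ≤ 2 * P z
  have hbad : ∀ z, T z ≤ 2 * P z := by
    intro z
    have h1 : T z ≤ (∑ y : Fin m → Bool, ∑ x ∈ Finset.univ.filter
        (fun x : (Fin n1 → Bool) × (Fin n2 → Bool) => Ext x.1 x.2 = y), q x.1 x.2 z)
        + ∑ _y : Fin m → Bool, ((2:ℝ)^m)⁻¹ * P z := by
      rw [← Finset.sum_add_distrib]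
      refine Finset.sum_le_sum fun y _ => ?_
      refine (abs_sub _ _).trans ?_
      have ha : (0:ℝ) ≤ ∑ x ∈ Finset.univ.filter
          (fun x : (Fin n1 → Bool) × (Fin n2 → Bool) => Ext x.1 x.2 = y), q x.1 x.2 z :=
        Finset.sum_nonneg fun _ _ => hq _ _ _
      have hb : (0:ℝ) ≤ ((2:ℝ)^m)⁻¹ * P z := mul_nonneg (by positivity) (hP0 z)
      rw [abs_of_nonneg ha, abs_of_nonneg hb]
    rw [hfib z, Finset.sum_const, hcardY] at h1
    have h2m : (2:ℝ) ^ m ≠ 0 := by positivity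
    calc T z ≤ P z + (2^m : ℕ) • (((2:ℝ)^m)⁻¹ * P z) := h1
      _ = 2 * P z := by
        rw [nsmul_eq_mul]
        push_cast
        field_simp
        ring
  -- good bound
  have hgood : ∀ z, M1 z ≤ (2:ℝ)^(-k1) * P z → M2 z ≤ (2:ℝ)^(-k2) * P z →
      T z ≤ 2 * ε * P z := by
    intro z h1 h2
    rcases eq_or_lt_of_le (hP0 z) with hPz | hPz
    · -- P z = 0 : all q _ _ z = 0
      have hq0 : ∀ x1 x2, q x1 x2 z = 0 := by
        intro x1 x2
        have h := (Finset.sum_eq_zero_iff_of_nonneg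
          (fun x1 _ => Finset.sum_nonneg fun x2 _ => hq x1 x2 z)).1 hPz.symm x1
          (Finset.mem_univ _)
        exact (Finset.sum_eq_zero_iff_of_nonneg (fun x2 _ => hq x1 x2 z)).1 h x2
          (Finset.mem_univ _)
      have hT0 : T z = 0 := by
        simp only [hTdef]
        refine Finset.sum_eq_zero fun y _ => ?_
        rw [Finset.sum_eq_zero (fun x _ => hq0 x.1 x.2), ← hPz]
        simp
      rw [hT0, ← hPz]
      ring_nf
      exact le_refl _
    · -- P z > 0
      set p1 : (Fin n1 → Bool) → ℝ := fun x1 => (∑ x2, q x1 x2 z) / P z with hp1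
      set p2 : (Fin n2 → Bool) → ℝ := fun x2 => (∑ x1, q x1 x2 z) / P z with hp2
      have hp1nn : ∀ x1, 0 ≤ p1 x1 := fun x1 =>
        div_nonneg (Finset.sum_nonneg fun _ _ => hq _ _ _) (hP0 z)
      have hp2nn : ∀ x2, 0 ≤ p2 x2 := fun x2 =>
        div_nonneg (Finset.sum_nonneg fun _ _ => hq _ _ _) (hP0 z)
      have hp1sum : ∑ x1, p1 x1 = 1 := by
        simp only [hp1]
        rw [← Finset.sum_div, div_eq_one_iff_eq hPz.ne']
      have hp2sum : ∑ x2, p2 x2 = 1 := by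
        simp only [hp2]
        rw [← Finset.sum_div, div_eq_one_iff_eq hPz.ne']
        exact Finset.sum_comm
      have hp1sup : Finset.univ.sup' Finset.univ_nonempty p1 ≤ (2:ℝ)^(-k1) := by
        rw [Finset.sup'_le_iff]
        intro x1 _
        simp only [hp1]
        rw [div_le_iff₀ hPz]
        calc (∑ x2, q x1 x2 z) ≤ M1 z :=
          Finset.le_sup' (fun x1 => ∑ x2, q x1 x2 z) (Finset.mem_univ x1)
          _ ≤ (2:ℝ)^(-k1) * P z := h1
      have hp2sup : Finset.univ.sup' Finset.univ_nonempty p2 ≤ (2:ℝ)^(-k2) := by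
        rw [Finset.sup'_le_iff]
        intro x2 _
        simp only [hp2]
        rw [div_le_iff₀ hPz]
        calc (∑ x1, q x1 x2 z) ≤ M2 z :=
          Finset.le_sup' (fun x2 => ∑ x1, q x1 x2 z) (Finset.mem_univ x2)
          _ ≤ (2:ℝ)^(-k2) * P z := h2
      have hkey := hExt p1 p2 hp1nn hp2nn hp1sum hp2sum hp1sup hp2sup
      -- relate T z to the extractor quantity
      have hTz : T z = P z * ∑ y : Fin m → Bool,
          |(∑ x ∈ Finset.univ.filter
              (fun x : (Fin n1 → Bool) × (Fin n2 → Bool) => Ext x.1 x.2 = y),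
              p1 x.1 * p2 x.2) - ((2:ℝ)^m)⁻¹| := by
        simp only [hTdef]
        conv_rhs => rw [Finset.mul_sum]
        refine Finset.sum_congr rfl fun y _ => ?_
        have hA : (∑ x ∈ Finset.univ.filter
            (fun x : (Fin n1 → Bool) × (Fin n2 → Bool) => Ext x.1 x.2 = y),
            q x.1 x.2 z) = P z * ∑ x ∈ Finset.univ.filter
            (fun x : (Fin n1 → Bool) × (Fin n2 → Bool) => Ext x.1 x.2 = y),
            p1 x.1 * p2 x.2 := by
          rw [Finset.mul_sum]
          refine Finset.sum_congr rfl fun x _ => ?_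
          simp only [hp1, hp2]
          have hm := hMarkov x.1 x.2 z
          have hne : P z ≠ 0 := hPz.ne'
          field_simp
          linear_combination hm
        rw [hA, show P z * (∑ x ∈ Finset.univ.filter
            (fun x : (Fin n1 → Bool) × (Fin n2 → Bool) => Ext x.1 x.2 = y),
            p1 x.1 * p2 x.2) - ((2:ℝ)^m)⁻¹ * P z = P z * ((∑ x ∈ Finset.univ.filter
            (fun x : (Fin n1 → Bool) × (Fin n2 → Bool) => Ext x.1 x.2 = y),
            p1 x.1 * p2 x.2) - ((2:ℝ)^m)⁻¹) from by ring, abs_mul, abs_of_pos hPz]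
      rw [hTz]
      have hb2 : ∑ y : Fin m → Bool,
          |(∑ x ∈ Finset.univ.filter
              (fun x : (Fin n1 → Bool) × (Fin n2 → Bool) => Ext x.1 x.2 = y),
              p1 x.1 * p2 x.2) - ((2:ℝ)^m)⁻¹| ≤ 2 * ε := by linarith
      calc P z * ∑ y : Fin m → Bool,
          |(∑ x ∈ Finset.univ.filter
              (fun x : (Fin n1 → Bool) × (Fin n2 → Bool) => Ext x.1 x.2 = y),
              p1 x.1 * p2 x.2) - ((2:ℝ)^m)⁻¹| ≤ P z * (2 * ε) :=
            mul_le_mul_of_nonneg_left hb2 (hP0 z)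
        _ = 2 * ε * P z := by ring
  -- bad mass bound
  set G : Finset Z := Finset.univ.filter
    (fun z => M1 z ≤ (2:ℝ)^(-k1) * P z ∧ M2 z ≤ (2:ℝ)^(-k2) * P z) with hG
  have hbadmass : ∑ z ∈ Gᶜ, P z ≤ 2 * ε := by
    have hstep : ∀ z ∈ Gᶜ, P z ≤ (2:ℝ)^k1 * M1 z + (2:ℝ)^k2 * M2 z := by
      intro z hz
      rw [Finset.mem_compl, hG, Finset.mem_filter] at hz
      push_neg at hz
      have key : ∀ (k Mv : ℝ), (2:ℝ)^(-k) * P z < Mv → P z ≤ (2:ℝ)^k * Mv := by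
        intro k Mv h
        have h2 : (2:ℝ)^k * ((2:ℝ)^(-k) * P z) ≤ (2:ℝ)^k * Mv :=
          mul_le_mul_of_nonneg_left h.le (Real.rpow_nonneg (by norm_num) k)
        calc P z = (2:ℝ)^k * ((2:ℝ)^(-k) * P z) := by
              rw [← mul_assoc, rpow_mul_rpow_neg k, one_mul]
          _ ≤ _ := h2
      have hpos1 : 0 ≤ (2:ℝ)^k1 * M1 z :=
        mul_nonneg (Real.rpow_nonneg (by norm_num) _) (hM10 z)
      have hpos2 : 0 ≤ (2:ℝ)^k2 * M2 z :=
        mul_nonneg (Real.rpow_nonneg (by norm_num) _) (hM20 z)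
      by_cases h1 : M1 z ≤ (2:ℝ)^(-k1) * P z
      · have h2 := hz (Finset.mem_univ z) h1
        have := key k2 (M2 z) h2
        linarith
      · have := key k1 (M1 z) (not_le.1 h1)
        linarith
    calc ∑ z ∈ Gᶜ, P z ≤ ∑ z ∈ Gᶜ, ((2:ℝ)^k1 * M1 z + (2:ℝ)^k2 * M2 z) :=
          Finset.sum_le_sum hstep
      _ ≤ ∑ z, ((2:ℝ)^k1 * M1 z + (2:ℝ)^k2 * M2 z) := by
          refine Finset.sum_le_sum_of_subset_of_nonneg (Finset.subset_univ _) ?_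
          intro z _ _
          have h1 := hM10 z; have h2 := hM20 z
          have e1 : (0:ℝ) ≤ (2:ℝ)^k1 := Real.rpow_nonneg (by norm_num) _
          have e2 : (0:ℝ) ≤ (2:ℝ)^k2 := Real.rpow_nonneg (by norm_num) _
          positivity
      _ = (2:ℝ)^k1 * ∑ z, M1 z + (2:ℝ)^k2 * ∑ z, M2 z := by
          rw [Finset.sum_add_distrib, Finset.mul_sum, Finset.mul_sum]
      _ ≤ (2:ℝ)^k1 * (ε * (2:ℝ)^(-k1)) + (2:ℝ)^k2 * (ε * (2:ℝ)^(-k2)) := by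
          have e1 := rpow_neg_add_logb k1 ε hε0
          have e2 := rpow_neg_add_logb k2 ε hε0
          refine add_le_add
            (mul_le_mul_of_nonneg_left ?_ (Real.rpow_nonneg (by norm_num) _))
            (mul_le_mul_of_nonneg_left ?_ (Real.rpow_nonneg (by norm_num) _))
          · rw [← e1]; exact hH1
          · rw [← e2]; exact hH2
      _ = 2 * ε := by
          have e1 := rpow_mul_rpow_neg k1
          have e2 := rpow_mul_rpow_neg k2
          linear_combination ε * e1 + ε * e2
  -- assemble
  have hswap : (∑ y : Fin m → Bool, ∑ z,
      |(∑ x ∈ Finset.univ.filter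
          (fun x : (Fin n1 → Bool) × (Fin n2 → Bool) => Ext x.1 x.2 = y),
          q x.1 x.2 z) - ((2:ℝ)^m)⁻¹ * P z|) = ∑ z, T z := by
    rw [Finset.sum_comm]
  rw [hswap]
  have hsplit : ∑ z, T z = ∑ z ∈ G, T z + ∑ z ∈ Gᶜ, T z :=
    (Finset.sum_add_sum_compl G T).symm
  have hGsum : ∑ z ∈ G, T z ≤ 2 * ε := by
    calc ∑ z ∈ G, T z ≤ ∑ z ∈ G, 2 * ε * P z := by
          refine Finset.sum_le_sum fun z hz => ?_
          rw [hG, Finset.mem_filter] at hz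
          exact hgood z hz.2.1 hz.2.2
      _ ≤ ∑ z, 2 * ε * P z := by
          refine Finset.sum_le_sum_of_subset_of_nonneg (Finset.subset_univ _) ?_
          intro z _ _
          have := hP0 z
          positivity
      _ = 2 * ε := by rw [← Finset.mul_sum, hPsum, mul_one]
  have hGcsum : ∑ z ∈ Gᶜ, T z ≤ 4 * ε := by
    calc ∑ z ∈ Gᶜ, T z ≤ ∑ z ∈ Gᶜ, 2 * P z := Finset.sum_le_sum fun z _ => hbad z
      _ = 2 * ∑ z ∈ Gᶜ, P z := by rw [Finset.mul_sum]
      _ ≤ 2 * (2 * ε) := by linarith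
      _ = 4 * ε := by ring
  rw [hsplit]
  linarith
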